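/- Let G be a connected graph with spanning tree T that is a path v_0 - v_1 - ... - v_n (so tree edges are linearly ordered), and let k be the minimum cut value of G. Fix a tree edge t. Sort the edges covering t by the position of their right endpoint, and let e_1, ..., e_k be the first k such edges with right endpoints u_1, ..., u_k. Then any tree edge t' strictly to the right of u_k satisfies Cut(t,t') > k. -/
import Mathlib


/-- In the path-tree model (tree is the path `v_0 - v_1 - ... - v_n`, tree edge `j`
joins `v_{j-1}` and `v_j`), a graph edge `e` with left endpoint `l e` and right
endpoint `r e` covers the tree edge `j` iff it spans it. -/
def pcovers {E : Type*} (l r : E → ℕ) (e : E) (j : ℕ) : Prop :=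
  l e < j ∧ j ≤ r e

/-- `T` is a path with tree edges `1..n`. Fix a tree edge `τ`, and
suppose the first `k` edges covering `τ` (sorted by right endpoint) form a set `F`
of `k` edges whose right endpoints are all `≤ u` (`u = u_k` is the `k`-th sorted
right endpoint). Then every tree edge `j'` strictly to the right of `u` satisfies
`Cut(τ, j') > k`, where `Cut` counts the graph edges covering exactly one of the two. -/
theorem stmt_5 {E : Type*} [Fintype E] (l r : E → ℕ) (n k τ u : ℕ)
    (hτ1 : 1 ≤ τ) (hτn : τ ≤ n) (hk : 1 ≤ k)
    -- every tree edge is itself an edge of the graph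
    (htree : ∀ j, 1 ≤ j → j ≤ n → ∃ e : E, l e = j - 1 ∧ r e = j)
    (F : Finset E) (hFcard : F.card = k)
    (hFcov : ∀ e ∈ F, pcovers l r e τ)
    (hFr : ∀ e ∈ F, r e ≤ u)
    (j' : ℕ) (hj'l : u < j') (hj'n : j' ≤ n) :
    k < ({e : E | Xor' (pcovers l r e τ) (pcovers l r e j')}).ncard := by
  classical
  -- F is nonempty, so τ ≤ u
  obtain ⟨f, hf⟩ := Finset.card_pos.mp (by omega : 0 < F.card)
  have hτu : τ ≤ u := le_trans (hFcov f hf).2 (hFr f hf)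
  -- the tree edge j' itself
  obtain ⟨e', hl', hr'⟩ := htree j' (by omega) hj'n
  set S : Set E := {e : E | Xor' (pcovers l r e τ) (pcovers l r e j')} with hS
  have hFsub : ↑F ⊆ S := by
    intro e he
    rw [Finset.mem_coe] at he
    refine Or.inl ⟨hFcov e he, ?_⟩
    intro hcov
    have := hFr e he
    have := hcov.2
    omega
  have he'S : e' ∈ S := by
    refine Or.inr ⟨⟨by omega, by omega⟩, ?_⟩
    intro hcov
    have := hcov.1
    omega
  have he'F : e' ∉ (↑F : Set E) := by
    intro h
    have := hFr e' h
    omega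
  have hsub : insert e' (↑F : Set E) ⊆ S := by
    intro x hx
    rcases hx with rfl | hx
    · exact he'S
    · exact hFsub hx
  calc k < k + 1 := by omega
    _ = (insert e' (↑F : Set E)).ncard := by
        rw [Set.ncard_insert_of_notMem he'F (Set.toFinite _), Set.ncard_coe_finset, hFcard]
    _ ≤ S.ncard := Set.ncard_le_ncard hsub (Set.toFinite _)
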